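/- If a POVM {Π^{a,b}}_{a,b∈{0,1}} on ℂ²⊗ℂ² consists of separable operators (each Π^{a,b} a finite sum of tensor products of positive semidefinite operators), then the average success probability of identifying a uniformly random Bell state, (1/4) Σ_{x1,x2} ⟨B^{x1x2}| Π^{x1,x2} |B^{x1x2}⟩, is at most 1/2. -/

import Mathlib

set_option maxHeartbeats 2000000

open scoped BigOperators Kronecker ComplexOrder

/-- Bell state `|B^{x1 x2}⟩ = (|0 x1⟩ + (-1)^{x2} |1 x̄1⟩)/√2`. -/
noncomputable def bell (x1 x2 : ZMod 2) : ZMod 2 × ZMod 2 → ℂ :=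
  fun p => if p.2 = p.1 + x1 then ((-1 : ℂ) ^ ((x2 * p.1).val)) / (Real.sqrt 2 : ℂ) else 0

/-- A separable operator on `ℂ²⊗ℂ²`: a finite sum of tensor products of
positive semidefinite operators. -/
def SeparableOp (M : Matrix ((ZMod 2) × (ZMod 2)) ((ZMod 2) × (ZMod 2)) ℂ) : Prop :=
  ∃ (n : ℕ) (P Q : Fin n → Matrix (ZMod 2) (ZMod 2) ℂ),
    (∀ i, (P i).PosSemidef ∧ (Q i).PosSemidef) ∧ M = ∑ i, (P i) ⊗ₖ (Q i)

/-- Born-rule value `⟨ψ| M |ψ⟩`. -/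
noncomputable def born (M : Matrix ((ZMod 2) × (ZMod 2)) ((ZMod 2) × (ZMod 2)) ℂ)
    (ψ : ZMod 2 × ZMod 2 → ℂ) : ℂ :=
  dotProduct (fun p => star (ψ p)) (M.mulVec ψ)

lemma sum_zmod2 {M : Type*} [AddCommMonoid M] (f : ZMod 2 → M) : ∑ x, f x = f 0 + f 1 :=
  Fin.sum_univ_two f

lemma zmod2_one_ne_zero' : ((1:ZMod 2) = 0) = False := by simp

lemma diag_facts {P : Matrix (ZMod 2) (ZMod 2) ℂ} (hP : P.PosSemidef) (i : ZMod 2) :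
    0 ≤ (P i i).re ∧ (P i i).im = 0 := by
  have h := hP.dotProduct_mulVec_nonneg (Pi.single i 1)
  rw [Complex.le_def] at h
  simp [dotProduct, Matrix.mulVec, Pi.single_apply] at h
  exact ⟨h.1, h.2.symm⟩

lemma herm_entry {P : Matrix (ZMod 2) (ZMod 2) ℂ} (hP : P.PosSemidef) :
    P 1 0 = (starRingEnd ℂ) (P 0 1) := by
  have := hP.1.apply 1 0
  rw [← this]; rfl

lemma offdiag_bound {P : Matrix (ZMod 2) (ZMod 2) ℂ} (hP : P.PosSemidef) :
    (P 0 1).re ^ 2 + (P 0 1).im ^ 2 ≤ (P 0 0).re * (P 1 1).re := by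
  have h10 := herm_entry hP
  have h00 := diag_facts hP 0
  have h11 := diag_facts hP 1
  set p : ℝ := (P 0 1).re ^ 2 + (P 0 1).im ^ 2 with hp
  have hpnn : 0 ≤ p := by positivity
  have key : ∀ s : ℝ, 0 ≤ (p * (P 0 0).re) * (s * s) + (-2 * p) * s + (P 1 1).re := by
    intro s
    have h := hP.dotProduct_mulVec_nonneg (fun j => if j = 0 then -(s : ℂ) * P 0 1 else 1)
    have hval : dotProduct (star (fun j => if j = 0 then -(s : ℂ) * P 0 1 else 1))
        (P.mulVec (fun j => if j = 0 then -(s : ℂ) * P 0 1 else 1)) =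
        (starRingEnd ℂ) (-(s : ℂ) * P 0 1) * (P 0 0 * (-(s : ℂ) * P 0 1) + P 0 1)
          + (P 1 0 * (-(s : ℂ) * P 0 1) + P 1 1) := by
      simp only [dotProduct, Matrix.mulVec, sum_zmod2, Pi.star_apply,
        eq_self_iff_true, if_true, zmod2_one_ne_zero', if_false, star_one, mul_one, one_mul,
        starRingEnd_apply]
    rw [hval, Complex.le_def] at h
    have h1 := h.1
    rw [h10] at h1
    simp only [Complex.zero_re, Complex.add_re, Complex.add_im, Complex.mul_re, Complex.mul_im,
      Complex.neg_re, Complex.neg_im, Complex.ofReal_re, Complex.ofReal_im,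
      Complex.conj_re, Complex.conj_im, map_mul, map_neg, Complex.conj_ofReal] at h1
    rw [h00.2] at h1
    ring_nf at h1 ⊢
    linarith [h1]
  have hd := discrim_le_zero key
  rw [discrim] at hd
  rcases eq_or_lt_of_le hpnn with h0 | h0
  · nlinarith [h00.1, h11.1]
  · nlinarith [hd]

lemma cs_bound (a b c d u : ℝ) (ha : 0 ≤ a) (hb : 0 ≤ b) (hc : 0 ≤ c) (hd : 0 ≤ d)
    (hu : u ^ 2 ≤ (a * b) * (c * d)) : 2 * u ≤ a * d + b * c := by
  rcases le_or_gt u 0 with h | h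
  · nlinarith [mul_nonneg ha hd, mul_nonneg hb hc]
  · nlinarith [sq_nonneg (a * d - b * c), mul_nonneg ha hd, mul_nonneg hb hc]

lemma key_prod (x1 x2 : ZMod 2) {P Q : Matrix (ZMod 2) (ZMod 2) ℂ}
    (hP : P.PosSemidef) (hQ : Q.PosSemidef) :
    (born (P ⊗ₖ Q) (bell x1 x2)).re ≤ (1 / 2 : ℝ) * ((P ⊗ₖ Q).trace).re := by
  have hs : ((Real.sqrt 2 : ℝ) : ℂ) ≠ 0 := by norm_cast; positivity
  have h2 : ((Real.sqrt 2 : ℝ) : ℂ) * ((Real.sqrt 2 : ℝ) : ℂ) = 2 := by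
    norm_cast
    rw [Real.mul_self_sqrt] ; norm_num
  have htr : (P ⊗ₖ Q).trace =
      P 0 0 * Q 0 0 + P 0 0 * Q 1 1 + P 1 1 * Q 0 0 + P 1 1 * Q 1 1 := by
    simp [Matrix.trace, Matrix.diag, Fintype.sum_prod_type, sum_zmod2,
      Matrix.kroneckerMap_apply]
    ring
  have h10P := herm_entry hP
  have h10Q := herm_entry hQ
  have hP00 := diag_facts hP 0
  have hP11 := diag_facts hP 1
  have hQ00 := diag_facts hQ 0
  have hQ11 := diag_facts hQ 1
  have hob := offdiag_bound hP
  have hobQ := offdiag_bound hQ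
  set a := (P 0 0).re; set b := (P 1 1).re; set c := (Q 0 0).re; set d := (Q 1 1).re
  set r := (P 0 1).re; set i := (P 0 1).im
  set r' := (Q 0 1).re; set i' := (Q 0 1).im
  have hu1 : (r * r' - i * i') ^ 2 ≤ (a * b) * (c * d) := by
    nlinarith [sq_nonneg (r * i' + i * r'), hob, hobQ, sq_nonneg r, sq_nonneg i,
      sq_nonneg r', sq_nonneg i']
  have hu2 : (r * r' + i * i') ^ 2 ≤ (a * b) * (c * d) := by
    nlinarith [sq_nonneg (r * i' - i * r'), hob, hobQ, sq_nonneg r, sq_nonneg i,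
      sq_nonneg r', sq_nonneg i']
  have c1 := cs_bound a b c d _ hP00.1 hP11.1 hQ00.1 hQ11.1 hu1
  have c2 := cs_bound a b c d _ hP00.1 hP11.1 hQ00.1 hQ11.1 hu2
  have c3 := cs_bound a b c d _ hP00.1 hP11.1 hQ00.1 hQ11.1 (by linarith [hu1] : (-(r * r' - i * i')) ^ 2 ≤ (a * b) * (c * d))
  have c4 := cs_bound a b c d _ hP00.1 hP11.1 hQ00.1 hQ11.1 (by linarith [hu2] : (-(r * r' + i * i')) ^ 2 ≤ (a * b) * (c * d))
  have c5 := cs_bound a b d c _ hP00.1 hP11.1 hQ11.1 hQ00.1 (by linarith [hu2] : (r * r' + i * i') ^ 2 ≤ (a * b) * (d * c))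
  have c6 := cs_bound a b d c _ hP00.1 hP11.1 hQ11.1 hQ00.1 (by linarith [hu2] : (-(r * r' + i * i')) ^ 2 ≤ (a * b) * (d * c))
  have c7 := cs_bound a b d c _ hP00.1 hP11.1 hQ11.1 hQ00.1 (by linarith [hu1] : (r * r' - i * i') ^ 2 ≤ (a * b) * (d * c))
  have c8 := cs_bound a b d c _ hP00.1 hP11.1 hQ11.1 hQ00.1 (by linarith [hu1] : (-(r * r' - i * i')) ^ 2 ≤ (a * b) * (d * c))
  rw [htr]
  have hcase : ∀ z : ZMod 2, z = 0 ∨ z = 1 := by decide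
  rcases hcase x1 with rfl | rfl <;> rcases hcase x2 with rfl | rfl
  · have hb : born (P ⊗ₖ Q) (bell 0 0) =
        (1/2 : ℂ) * (P 0 0 * Q 0 0 + P 1 1 * Q 1 1 + P 0 1 * Q 0 1 + P 1 0 * Q 1 0) := by
      simp [born, bell, dotProduct, Matrix.mulVec, Fintype.sum_prod_type,
        sum_zmod2, Matrix.kroneckerMap_apply, show (2:ZMod 2) = 0 from rfl,
        show ZMod.val (0 : ZMod 2) = 0 from rfl, show ZMod.val (1 : ZMod 2) = 1 from rfl,
        show (1+1:ZMod 2) = 0 from rfl, div_eq_mul_inv]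
      field_simp
      linear_combination (-(P 0 0 * Q 0 0 + P 1 1 * Q 1 1 + P 0 1 * Q 0 1 + P 1 0 * Q 1 0)) * h2
    rw [hb, h10P, h10Q]
    simp only [Complex.mul_re, Complex.mul_im, Complex.add_re, Complex.add_im,
      Complex.conj_re, Complex.conj_im, Complex.one_re, Complex.one_im, Complex.div_re,
      Complex.div_im, Complex.normSq, Complex.ofReal_re, Complex.ofReal_im, MonoidWithZeroHom.coe_mk,
      ZeroHom.coe_mk, Complex.re_ofNat, Complex.im_ofNat]
    rw [hP00.2, hP11.2, hQ00.2, hQ11.2]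
    ring_nf
    nlinarith [c1, c3]
  · have hb : born (P ⊗ₖ Q) (bell 0 1) =
        (1/2 : ℂ) * (P 0 0 * Q 0 0 + P 1 1 * Q 1 1 - P 0 1 * Q 0 1 - P 1 0 * Q 1 0) := by
      simp [born, bell, dotProduct, Matrix.mulVec, Fintype.sum_prod_type,
        sum_zmod2, Matrix.kroneckerMap_apply, show (2:ZMod 2) = 0 from rfl,
        show ZMod.val (0 : ZMod 2) = 0 from rfl, show ZMod.val (1 : ZMod 2) = 1 from rfl,
        show (1+1:ZMod 2) = 0 from rfl, div_eq_mul_inv]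
      field_simp
      linear_combination (-(P 0 0 * Q 0 0 + P 1 1 * Q 1 1 - P 0 1 * Q 0 1 - P 1 0 * Q 1 0)) * h2
    rw [hb, h10P, h10Q]
    simp only [Complex.mul_re, Complex.mul_im, Complex.add_re, Complex.add_im,
      Complex.sub_re, Complex.sub_im, Complex.neg_re, Complex.neg_im,
      Complex.conj_re, Complex.conj_im, Complex.one_re, Complex.one_im, Complex.div_re,
      Complex.div_im, Complex.normSq, Complex.ofReal_re, Complex.ofReal_im, MonoidWithZeroHom.coe_mk,
      ZeroHom.coe_mk, Complex.re_ofNat, Complex.im_ofNat]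
    rw [hP00.2, hP11.2, hQ00.2, hQ11.2]
    ring_nf
    nlinarith [c1, c2, c3, c4, c5, c6, c7, c8]
  · have hb : born (P ⊗ₖ Q) (bell 1 0) =
        (1/2 : ℂ) * (P 0 0 * Q 1 1 + P 1 1 * Q 0 0 + P 0 1 * Q 1 0 + P 1 0 * Q 0 1) := by
      simp [born, bell, dotProduct, Matrix.mulVec, Fintype.sum_prod_type,
        sum_zmod2, Matrix.kroneckerMap_apply, show (2:ZMod 2) = 0 from rfl,
        show ZMod.val (0 : ZMod 2) = 0 from rfl, show ZMod.val (1 : ZMod 2) = 1 from rfl,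
        show (1+1:ZMod 2) = 0 from rfl, div_eq_mul_inv]
      field_simp
      linear_combination (-(P 0 0 * Q 1 1 + P 1 1 * Q 0 0 + P 0 1 * Q 1 0 + P 1 0 * Q 0 1)) * h2
    rw [hb, h10P, h10Q]
    simp only [Complex.mul_re, Complex.mul_im, Complex.add_re, Complex.add_im,
      Complex.sub_re, Complex.sub_im, Complex.neg_re, Complex.neg_im,
      Complex.conj_re, Complex.conj_im, Complex.one_re, Complex.one_im, Complex.div_re,
      Complex.div_im, Complex.normSq, Complex.ofReal_re, Complex.ofReal_im, MonoidWithZeroHom.coe_mk,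
      ZeroHom.coe_mk, Complex.re_ofNat, Complex.im_ofNat]
    rw [hP00.2, hP11.2, hQ00.2, hQ11.2]
    ring_nf
    nlinarith [c1, c2, c3, c4, c5, c6, c7, c8]
  · have hb : born (P ⊗ₖ Q) (bell 1 1) =
        (1/2 : ℂ) * (P 0 0 * Q 1 1 + P 1 1 * Q 0 0 - P 0 1 * Q 1 0 - P 1 0 * Q 0 1) := by
      simp [born, bell, dotProduct, Matrix.mulVec, Fintype.sum_prod_type,
        sum_zmod2, Matrix.kroneckerMap_apply, show (2:ZMod 2) = 0 from rfl,
        show ZMod.val (0 : ZMod 2) = 0 from rfl, show ZMod.val (1 : ZMod 2) = 1 from rfl,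
        show (1+1:ZMod 2) = 0 from rfl, div_eq_mul_inv]
      field_simp
      linear_combination (-(P 0 0 * Q 1 1 + P 1 1 * Q 0 0 - P 0 1 * Q 1 0 - P 1 0 * Q 0 1)) * h2
    rw [hb, h10P, h10Q]
    simp only [Complex.mul_re, Complex.mul_im, Complex.add_re, Complex.add_im,
      Complex.sub_re, Complex.sub_im, Complex.neg_re, Complex.neg_im,
      Complex.conj_re, Complex.conj_im, Complex.one_re, Complex.one_im, Complex.div_re,
      Complex.div_im, Complex.normSq, Complex.ofReal_re, Complex.ofReal_im, MonoidWithZeroHom.coe_mk,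
      ZeroHom.coe_mk, Complex.re_ofNat, Complex.im_ofNat]
    rw [hP00.2, hP11.2, hQ00.2, hQ11.2]
    ring_nf
    nlinarith [c1, c2, c3, c4, c5, c6, c7, c8]

lemma born_sum {n : ℕ} (M : Fin n → Matrix ((ZMod 2) × (ZMod 2)) ((ZMod 2) × (ZMod 2)) ℂ)
    (ψ : ZMod 2 × ZMod 2 → ℂ) : born (∑ i, M i) ψ = ∑ i, born (M i) ψ :=
  map_sum (AddMonoidHom.mk' (fun M => born M ψ)
    (fun A B => by simp [born, Matrix.add_mulVec, dotProduct_add])) M Finset.univ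

/-- Any POVM with separable elements identifies a uniformly random Bell state
with probability at most `1/2`. -/
theorem separable_povm_bell_discrimination_bound
    (Pov : ZMod 2 → ZMod 2 → Matrix ((ZMod 2) × (ZMod 2)) ((ZMod 2) × (ZMod 2)) ℂ)
    (hsep : ∀ a b, SeparableOp (Pov a b))
    (hsum : ∑ a : ZMod 2, ∑ b : ZMod 2, Pov a b = 1) :
    ((1 / 4 : ℂ) * ∑ x1 : ZMod 2, ∑ x2 : ZMod 2,
        born (Pov x1 x2) (bell x1 x2)).re ≤ 1 / 2 := by
  have key_elem : ∀ a b : ZMod 2,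
      (born (Pov a b) (bell a b)).re ≤ (1 / 2 : ℝ) * ((Pov a b).trace).re := by
    intro a b
    obtain ⟨n, P, Q, hPQ, hM⟩ := hsep a b
    rw [hM, born_sum, Matrix.trace_sum, Complex.re_sum, Complex.re_sum, Finset.mul_sum]
    exact Finset.sum_le_sum fun i _ => key_prod a b (hPQ i).1 (hPQ i).2
  have htr : ∑ a : ZMod 2, ∑ b : ZMod 2, ((Pov a b).trace).re = 4 := by
    have h1 : (∑ a : ZMod 2, ∑ b : ZMod 2, (Pov a b).trace) =
        ((1 : Matrix ((ZMod 2) × (ZMod 2)) ((ZMod 2) × (ZMod 2)) ℂ)).trace := by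
      rw [← hsum]
      simp [Matrix.trace_sum]
    have h2 : (∑ a : ZMod 2, ∑ b : ZMod 2, ((Pov a b).trace)).re
        = ∑ a : ZMod 2, ∑ b : ZMod 2, ((Pov a b).trace).re := by
      rw [Complex.re_sum]
      exact Finset.sum_congr rfl fun a _ => Complex.re_sum _ _
    rw [← h2, h1]
    simp [Matrix.trace_one]
  rw [show (1 / 4 : ℂ) = ((1 / 4 : ℝ) : ℂ) by norm_num, Complex.re_ofReal_mul]
  have hre : (∑ x1 : ZMod 2, ∑ x2 : ZMod 2, born (Pov x1 x2) (bell x1 x2)).re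
      = ∑ x1 : ZMod 2, ∑ x2 : ZMod 2, (born (Pov x1 x2) (bell x1 x2)).re := by
    rw [Complex.re_sum]
    exact Finset.sum_congr rfl fun a _ => Complex.re_sum _ _
  rw [hre]
  have hb : ∑ x1 : ZMod 2, ∑ x2 : ZMod 2, (born (Pov x1 x2) (bell x1 x2)).re
      ≤ ∑ x1 : ZMod 2, ∑ x2 : ZMod 2, (1 / 2 : ℝ) * ((Pov x1 x2).trace).re := by
    exact Finset.sum_le_sum fun a _ => Finset.sum_le_sum fun b _ => key_elem a b
  have hb2 : ∑ x1 : ZMod 2, ∑ x2 : ZMod 2, (1 / 2 : ℝ) * ((Pov x1 x2).trace).re = 2 := by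
    simp only [← Finset.mul_sum] at *
    rw [htr]; norm_num
  linarith [hb, hb2.le, hb2.ge]
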